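/- Let G be a finite group and n a positive natural number. Let f : FreeGroup (Option G) →* Multiplicative (ZMod n) be the unique homomorphism sending each generator a_g = FreeGroup.of (some g) (g ∈ G) to the identity and a_* = FreeGroup.of none to Multiplicative.ofAdd 1. Then the kernel of f is generated (as a subgroup) by the set { a_*^k · a_g · a_*^{−k} : g ∈ G, 0 ≤ k < n } ∪ { a_*^n }. -/

import Mathlib

namespace KernelGenAux

variable {G : Type} [Group G] (n : ℕ)

/-- The generating set. -/
def S (G : Type) [Group G] (n : ℕ) : Set (FreeGroup (Option G)) :=
  { x | ∃ (g : G) (k : ℕ), k < n ∧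
      x = (FreeGroup.of (none : Option G)) ^ k * FreeGroup.of (some g) *
          ((FreeGroup.of (none : Option G)) ^ k)⁻¹ } ∪
    {(FreeGroup.of (none : Option G)) ^ n}

local notation "t" => FreeGroup.of (none : Option G)
local notation "N" => Subgroup.closure (S G n)

lemma tn_mem : (t) ^ n ∈ N := Subgroup.subset_closure (Or.inr rfl)

lemma gen_mem {g : G} {k : ℕ} (hk : k < n) :
    (t) ^ k * FreeGroup.of (some g) * ((t) ^ k)⁻¹ ∈ N :=
  Subgroup.subset_closure (Or.inl ⟨g, k, hk, rfl⟩)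

lemma conj_zpow (hn : 0 < n) (m : ℤ) (g : G) :
    (t) ^ m * FreeGroup.of (some g) * ((t) ^ m)⁻¹ ∈ N := by
  have hn' : (0:ℤ) < n := by exact_mod_cast hn
  set r : ℕ := (m % n).toNat with hr
  have hr0 : (0:ℤ) ≤ m % n := Int.emod_nonneg m (by omega)
  have hrn : (m % n : ℤ) < n := Int.emod_lt_of_pos m hn'
  have hrlt : r < n := by omega
  have hm : m = (n : ℤ) * (m / n) + (r : ℤ) := by
    have := Int.mul_ediv_add_emod m n
    omega
  have key : (t) ^ m = ((t) ^ n) ^ (m / n) * (t) ^ r := by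
    rw [← zpow_natCast (t) n, ← zpow_mul, ← zpow_natCast (t) r, ← zpow_add, ← hm]
  have h1 : ((t) ^ n : FreeGroup (Option G)) ^ (m / n) ∈ N := zpow_mem (tn_mem n) _
  have h2 : (t) ^ r * FreeGroup.of (some g) * ((t) ^ r)⁻¹ ∈ N := gen_mem n hrlt
  have heq : (t) ^ m * FreeGroup.of (some g) * ((t) ^ m)⁻¹
      = ((t)^n)^(m/n) * ((t) ^ r * FreeGroup.of (some g) * ((t) ^ r)⁻¹) * (((t)^n)^(m/(n:ℤ)))⁻¹ := by
    rw [key]; group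
  rw [heq]
  exact mul_mem (mul_mem h1 h2) (inv_mem h1)

lemma conjN (hn : 0 < n) (m : ℤ) {w : FreeGroup (Option G)} (hw : w ∈ N) :
    (t) ^ m * w * ((t) ^ m)⁻¹ ∈ N := by
  induction hw using Subgroup.closure_induction with
  | mem x hx =>
    rcases hx with ⟨g, k, hk, rfl⟩ | hx
    · have heq : (t) ^ m * ((t) ^ k * FreeGroup.of (some g) * ((t) ^ k)⁻¹) * ((t) ^ m)⁻¹
          = (t) ^ (m + k) * FreeGroup.of (some g) * ((t) ^ (m + k))⁻¹ := by
        rw [zpow_add, zpow_natCast]; group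
      rw [heq]; exact conj_zpow n hn _ g
    · simp only [Set.mem_singleton_iff] at hx
      subst hx
      have heq : (t) ^ m * (t) ^ n * ((t) ^ m)⁻¹ = (t) ^ n := by
        rw [← zpow_natCast (t) n, ← zpow_add, ← zpow_sub]; ring_nf
      rw [heq]; exact tn_mem n
  | one => simpa using one_mem (Subgroup.closure (S G n))
  | mul x y _ _ hx hy =>
    have heq : (t) ^ m * (x * y) * ((t) ^ m)⁻¹
        = ((t) ^ m * x * ((t) ^ m)⁻¹) * ((t) ^ m * y * ((t) ^ m)⁻¹) := by group
    rw [heq]; exact mul_mem hx hy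
  | inv x _ hx =>
    have heq : (t) ^ m * x⁻¹ * ((t) ^ m)⁻¹ = ((t) ^ m * x * ((t) ^ m)⁻¹)⁻¹ := by group
    rw [heq]; exact inv_mem hx

end KernelGenAux

theorem kernel_generators (G : Type) [Group G] [Finite G] (n : ℕ) (hn : 0 < n)
    (f : FreeGroup (Option G) →* Multiplicative (ZMod n))
    (hf₁ : ∀ g : G, f (FreeGroup.of (some g)) = 1)
    (hf₂ : f (FreeGroup.of none) = Multiplicative.ofAdd 1) :
    f.ker = Subgroup.closure
      ({ x | ∃ (g : G) (k : ℕ), k < n ∧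
          x = (FreeGroup.of (none : Option G)) ^ k * FreeGroup.of (some g) *
              ((FreeGroup.of (none : Option G)) ^ k)⁻¹ } ∪
        {(FreeGroup.of (none : Option G)) ^ n}) := by
  classical
  have : NeZero n := ⟨hn.ne'⟩
  set N := Subgroup.closure (KernelGenAux.S G n) with hN
  show f.ker = N
  set t : FreeGroup (Option G) := FreeGroup.of none with ht
  have hpure : ∀ b : Option G, (pure b : FreeGroup (Option G)) = FreeGroup.of b := fun _ => rfl
  have htn : f (t ^ n) = 1 := by
    rw [ht, map_pow, hf₂, ← ofAdd_nsmul]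
    simp [ZMod.natCast_self]
  -- main claim
  have main : ∀ x : FreeGroup (Option G), ∃ k : ℕ, k < n ∧ x * (t ^ k)⁻¹ ∈ N ∧
      f x = Multiplicative.ofAdd ((k : ℕ) : ZMod n) := by
    intro x
    induction x using FreeGroup.induction_on with
    | C1 => exact ⟨0, hn, by simpa using one_mem N, by simp⟩
    | of b =>
      cases b with
      | some g =>
        refine ⟨0, hn, ?_, by simpa using hf₁ g⟩
        simpa using KernelGenAux.gen_mem n (k := 0) (g := g) hn
      | none =>
        rcases eq_or_lt_of_le (Nat.succ_le_of_lt hn) with h1 | h1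
        · refine ⟨0, hn, ?_, ?_⟩
          · have heq : (FreeGroup.of (none : Option G)) * (t ^ 0)⁻¹ = t ^ n := by
              rw [← h1]; simp [ht]
            rw [heq]; exact KernelGenAux.tn_mem n
          · rw [hf₂]
            have : Subsingleton (ZMod n) := by rw [← h1]; infer_instance
            congr 1
            exact Subsingleton.elim _ _
        · refine ⟨1, h1, ?_, by simpa using hf₂⟩
          simpa [ht] using one_mem N
    | inv_of b _ =>
      cases b with
      | some g =>
        refine ⟨0, hn, ?_, ?_⟩
        · have hg : (FreeGroup.of (some g) : FreeGroup (Option G)) ∈ N := by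
            simpa using KernelGenAux.gen_mem n (k := 0) (g := g) hn
          simpa using inv_mem hg
        · simp [hf₁ g]
      | none =>
        refine ⟨n - 1, by omega, ?_, ?_⟩
        · have he : (FreeGroup.of (none : Option G))⁻¹ * (t ^ (n-1))⁻¹ = (t ^ n)⁻¹ := by
            rw [← mul_inv_rev]
            congr 1
            rw [ht, ← pow_succ]
            congr 1; omega
          rw [he]; exact inv_mem (KernelGenAux.tn_mem n)
        · rw [map_inv, hf₂]
          have hc : ((n - 1 : ℕ) : ZMod n) = -1 := by
            have h2 : ((n - 1 : ℕ) : ZMod n) = (n : ZMod n) - 1 := by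
              rw [Nat.cast_sub hn]; simp
            rw [h2, ZMod.natCast_self]; ring
          rw [hc]
          rfl
    | mul x y ihx ihy =>
      obtain ⟨k₁, hk₁, hm₁, hv₁⟩ := ihx
      obtain ⟨k₂, hk₂, hm₂, hv₂⟩ := ihy
      refine ⟨(k₁ + k₂) % n, Nat.mod_lt _ hn, ?_, ?_⟩
      · set k := (k₁ + k₂) % n with hk
        set q := (k₁ + k₂) / n with hq'
        have hq : k₁ + k₂ = n * q + k := (Nat.div_add_mod _ _).symm
        have hsplit : t ^ (k₁ + k₂) = (t ^ n) ^ q * t ^ k := by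
          rw [← pow_mul, ← pow_add, ← hq]
        have hpow : t ^ k₁ * t ^ k₂ * (t ^ k)⁻¹ = (t ^ n) ^ q := by
          rw [← pow_add, hsplit, mul_inv_cancel_right]
        have key : x * y * (t ^ k)⁻¹
            = (x * (t ^ k₁)⁻¹) * (t ^ k₁ * (y * (t ^ k₂)⁻¹) * (t ^ k₁)⁻¹) *
              (t ^ k₁ * t ^ k₂ * (t ^ k)⁻¹) := by group
        rw [key, hpow]
        refine mul_mem (mul_mem hm₁ ?_) (pow_mem (KernelGenAux.tn_mem n) _)
        have hc := KernelGenAux.conjN n hn (k₁ : ℤ) hm₂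
        simpa [zpow_natCast, ht] using hc
      · rw [map_mul, hv₁, hv₂, ← ofAdd_add]
        congr 1
        rw [ZMod.natCast_mod, Nat.cast_add]
  apply le_antisymm
  · intro x hx
    obtain ⟨k, hk, hmem, hval⟩ := main x
    have hx1 : f x = 1 := hx
    rw [hx1] at hval
    have hz : ((k : ℕ) : ZMod n) = 0 := by simpa using hval.symm
    have hdvd : n ∣ k := (ZMod.natCast_eq_zero_iff k n).mp hz
    have hk0 : k = 0 := Nat.eq_zero_of_dvd_of_lt hdvd hk
    subst hk0
    simpa using hmem
  · rw [Subgroup.closure_le]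
    rintro x (⟨g, k, hk, rfl⟩ | hx)
    · have : f ((FreeGroup.of (none : Option G)) ^ k * FreeGroup.of (some g) *
          ((FreeGroup.of (none : Option G)) ^ k)⁻¹) = 1 := by
        simp [map_mul, map_inv, map_pow, hf₁]
      simpa [MonoidHom.mem_ker] using this
    · simp only [Set.mem_singleton_iff] at hx
      subst hx
      simpa [MonoidHom.mem_ker, ht] using htn
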